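/- Error approximant property for linear Padé–Chebyshev approximation: Let f : [−1,1] → ℝ be a function such that f·w is Lebesgue integrable on [−1,1], and define c_k = (2/π)∫_{−1}^{1} f(x)T_k(x)w(x)dx for every integer k ≥ 0. Let m, n be nonnegative integers and Δb₀, …, Δb_m real numbers. Define the polynomials ΔQ = (1/2)Δb₀T₀ + Σ_{j=1}^{m} Δb_j T_j and ΔP = (1/2)Δa₀T₀ + Σ_{i=1}^{n} Δa_i T_i, where for each i = 0, …, n, Δa_i = (1/2)·[Δb₀·c_i + Σ_{j=1}^{m} Δb_j·(c_{i+j} + c_{|i−j|})]. Then ∫_{−1}^{1} ( f(x)·ΔQ(x) − ΔP(x) ) T_i(x) w(x) dx = 0 for every i = 0, 1, …, n. -/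

import Mathlib

open MeasureTheory Polynomial Polynomial.Chebyshev

noncomputable def chebW : ℝ → ℝ := fun x => 1 / Real.sqrt (1 - x ^ 2)

lemma cheb_image_cos : Real.cos '' Set.Ioo 0 Real.pi = Set.Ioo (-1 : ℝ) 1 := by
  ext y
  constructor
  · rintro ⟨θ, hθ, rfl⟩
    have h0 : (0:ℝ) ∈ Set.Icc (0:ℝ) Real.pi := ⟨le_refl _, Real.pi_pos.le⟩
    have hπ : Real.pi ∈ Set.Icc (0:ℝ) Real.pi := ⟨Real.pi_pos.le, le_refl _⟩
    have hθ' : θ ∈ Set.Icc (0:ℝ) Real.pi := ⟨hθ.1.le, hθ.2.le⟩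
    constructor
    · have := Real.strictAntiOn_cos hθ' hπ hθ.2
      simpa using this
    · have := Real.strictAntiOn_cos h0 hθ' hθ.1
      simpa using this
  · intro hy
    refine ⟨Real.arccos y, ⟨Real.arccos_pos.2 hy.2, ?_⟩, Real.cos_arccos hy.1.le hy.2.le⟩
    exact lt_of_le_of_ne (Real.arccos_le_pi y)
      (fun h => absurd (Real.arccos_eq_pi.1 h) (by linarith [hy.1]))

lemma cheb_subst (g : ℝ → ℝ) :
    ∫ x in Set.Ioo (-1:ℝ) 1, g x = ∫ θ in Set.Ioo 0 Real.pi, Real.sin θ * g (Real.cos θ) := by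
  rw [← cheb_image_cos,
    integral_image_eq_integral_abs_deriv_smul measurableSet_Ioo
      (fun θ _ => (Real.hasDerivAt_cos θ).hasDerivWithinAt)
      (Real.injOn_cos.mono Set.Ioo_subset_Icc_self) g]
  refine setIntegral_congr_fun measurableSet_Ioo fun θ hθ => ?_
  rw [smul_eq_mul, abs_neg, abs_of_nonneg (Real.sin_nonneg_of_nonneg_of_le_pi hθ.1.le hθ.2.le)]

lemma cheb_sin_mul_w (θ : ℝ) (hθ : θ ∈ Set.Ioo 0 Real.pi) :
    Real.sin θ * chebW (Real.cos θ) = 1 := by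
  have hs : 0 < Real.sin θ := Real.sin_pos_of_pos_of_lt_pi hθ.1 hθ.2
  have h1 : (1:ℝ) - Real.cos θ ^ 2 = Real.sin θ ^ 2 := by
    have := Real.sin_sq_add_cos_sq θ; linarith
  simp only [chebW, h1, Real.sqrt_sq hs.le]
  field_simp

lemma cheb_subst_w (g : ℝ → ℝ) :
    ∫ x in Set.Ioo (-1:ℝ) 1, g x * chebW x
      = ∫ θ in Set.Ioo 0 Real.pi, g (Real.cos θ) := by
  rw [cheb_subst (fun x => g x * chebW x)]
  refine setIntegral_congr_fun measurableSet_Ioo fun θ hθ => ?_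
  have h := cheb_sin_mul_w θ hθ
  calc Real.sin θ * (g (Real.cos θ) * chebW (Real.cos θ))
      = (Real.sin θ * chebW (Real.cos θ)) * g (Real.cos θ) := by ring
    _ = g (Real.cos θ) := by rw [h, one_mul]

lemma chebW_integrableOn_Ioo : IntegrableOn chebW (Set.Ioo (-1:ℝ) 1) := by
  rw [← cheb_image_cos,
    integrableOn_image_iff_integrableOn_abs_deriv_smul measurableSet_Ioo
      (fun θ _ => (Real.hasDerivAt_cos θ).hasDerivWithinAt)
      (Real.injOn_cos.mono Set.Ioo_subset_Icc_self)]
  have h1 : IntegrableOn (fun _ : ℝ => (1:ℝ)) (Set.Ioo 0 Real.pi) :=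
    integrableOn_const measure_Ioo_lt_top.ne
  refine h1.congr_fun (fun θ hθ => ?_) measurableSet_Ioo
  rw [smul_eq_mul, abs_neg, abs_of_nonneg (Real.sin_nonneg_of_nonneg_of_le_pi hθ.1.le hθ.2.le)]
  exact (cheb_sin_mul_w θ hθ).symm

lemma chebW_integrableOn_Icc : IntegrableOn chebW (Set.Icc (-1:ℝ) 1) :=
  (integrableOn_Icc_iff_integrableOn_Ioo).2 chebW_integrableOn_Ioo

lemma integral_T_chebW (j : ℕ) :
    ∫ x in Set.Ioo (-1:ℝ) 1, (T ℝ j).eval x * chebW x = if j = 0 then Real.pi else 0 := by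
  rw [cheb_subst_w (fun x => (T ℝ j).eval x)]
  have h1 : ∀ θ ∈ Set.Ioo (0:ℝ) Real.pi,
      (T ℝ j).eval (Real.cos θ) = Real.cos ((j:ℝ) * θ) := by
    intro θ _
    have := Polynomial.Chebyshev.T_real_cos θ (j : ℤ)
    push_cast at this ⊢
    exact this
  rw [setIntegral_congr_fun measurableSet_Ioo h1]
  rw [← integral_Ioc_eq_integral_Ioo, ← intervalIntegral.integral_of_le Real.pi_pos.le]
  rcases Nat.eq_zero_or_pos j with h | h
  · simp [h]
  · rw [if_neg h.ne']
    have hj : (j:ℝ) ≠ 0 := Nat.cast_ne_zero.2 h.ne'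
    rw [intervalIntegral.integral_comp_mul_left (fun x => Real.cos x) hj]
    simp [Real.sin_nat_mul_pi]

lemma T_int_natAbs (z : ℤ) : T ℝ z = T ℝ (z.natAbs : ℤ) := by
  rcases Int.natAbs_eq z with h | h
  · rw [← h]
  · conv_lhs => rw [h]
    rw [Polynomial.Chebyshev.T_neg]

lemma chebW_poly_integrableOn (p : ℝ[X]) :
    IntegrableOn (fun x => p.eval x * chebW x) (Set.Ioo (-1:ℝ) 1) := by
  have h := chebW_integrableOn_Icc.mul_continuousOn p.continuous.continuousOn isCompact_Icc
  exact ((integrableOn_Icc_iff_integrableOn_Ioo).1 h).congr_fun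
    (fun x _ => by ring) measurableSet_Ioo

lemma cheb_T_eval_prod (j k : ℕ) (x : ℝ) :
    (T ℝ j).eval x * (T ℝ k).eval x
      = ((T ℝ ((j+k : ℕ))).eval x + (T ℝ ((((j:ℤ)-(k:ℤ)).natAbs : ℕ))).eval x) / 2 := by
  have h := congrArg (Polynomial.eval x) (Polynomial.Chebyshev.T_mul_T (R := ℝ) (j:ℤ) (k:ℤ))
  simp only [Polynomial.eval_mul, Polynomial.eval_add, Polynomial.eval_ofNat] at h
  rw [T_int_natAbs ((j:ℤ)-(k:ℤ))] at h
  have hc : ((j:ℤ)+(k:ℤ)) = ((j+k : ℕ) : ℤ) := by push_cast; ring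
  rw [hc] at h
  linarith

lemma cheb_prod_integral (u : ℝ → ℝ)
    (hu : ∀ p : ℝ[X], IntegrableOn (fun x => u x * p.eval x * chebW x) (Set.Ioo (-1:ℝ) 1))
    (j k : ℕ) :
    ∫ x in Set.Ioo (-1:ℝ) 1, u x * ((T ℝ j).eval x * (T ℝ k).eval x) * chebW x
      = ((∫ x in Set.Ioo (-1:ℝ) 1, u x * (T ℝ ((j+k : ℕ))).eval x * chebW x)
        + ∫ x in Set.Ioo (-1:ℝ) 1,
            u x * (T ℝ ((((j:ℤ)-(k:ℤ)).natAbs : ℕ))).eval x * chebW x) / 2 := by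
  have hpt : ∀ x ∈ Set.Ioo (-1:ℝ) 1,
      u x * ((T ℝ j).eval x * (T ℝ k).eval x) * chebW x
        = (1/2) * (u x * (T ℝ ((j+k : ℕ))).eval x * chebW x)
          + (1/2) * (u x * (T ℝ ((((j:ℤ)-(k:ℤ)).natAbs : ℕ))).eval x * chebW x) := by
    intro x _
    rw [cheb_T_eval_prod j k x]; ring
  rw [setIntegral_congr_fun measurableSet_Ioo hpt,
    integral_add ((hu _).const_mul _) ((hu _).const_mul _),
    integral_const_mul, integral_const_mul]
  ring


/-- Error approximant property for linear Padé–Chebyshev approximation: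
the error approximant coefficients satisfy the orthogonality relations
∫ (f·ΔQ − ΔP)·T_i·w = 0 for i = 0, …, n. -/
theorem pade_chebyshev_error_approximant
    (f : ℝ → ℝ)
    (hf : IntegrableOn (fun x => f x * (1 / Real.sqrt (1 - x ^ 2))) (Set.Icc (-1 : ℝ) 1))
    (c : ℕ → ℝ)
    (hc : ∀ k : ℕ, c k = (2 / Real.pi) *
      ∫ x in Set.Icc (-1 : ℝ) 1, f x * (T ℝ k).eval x * (1 / Real.sqrt (1 - x ^ 2)))
    (m n : ℕ) (Δb : ℕ → ℝ) (Δa : ℕ → ℝ)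
    (hΔa : ∀ i ≤ n, Δa i = (1 / 2) * (Δb 0 * c i +
      ∑ j ∈ Finset.Icc 1 m, Δb j * (c (i + j) + c ((i : ℤ) - (j : ℤ)).natAbs)))
    (ΔQ ΔP : ℝ → ℝ)
    (hΔQ : ∀ x, ΔQ x = (1 / 2) * Δb 0 * (T ℝ 0).eval x +
      ∑ j ∈ Finset.Icc 1 m, Δb j * (T ℝ j).eval x)
    (hΔP : ∀ x, ΔP x = (1 / 2) * Δa 0 * (T ℝ 0).eval x +
      ∑ i ∈ Finset.Icc 1 n, Δa i * (T ℝ i).eval x) :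
    ∀ i ≤ n,
      ∫ x in Set.Icc (-1 : ℝ) 1,
        (f x * ΔQ x - ΔP x) * (T ℝ i).eval x * (1 / Real.sqrt (1 - x ^ 2)) = 0 := by
  intro i hi
  -- replace the weight by `chebW` (definitionally equal)
  show ∫ x in Set.Icc (-1:ℝ) 1, (f x * ΔQ x - ΔP x) * (T ℝ i).eval x * chebW x = 0
  rw [MeasureTheory.integral_Icc_eq_integral_Ioo]
  have hfw : IntegrableOn (fun x => f x * chebW x) (Set.Icc (-1:ℝ) 1) := hf
  -- integrability of f · p · w
  have hfp : ∀ p : ℝ[X],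
      IntegrableOn (fun x => f x * p.eval x * chebW x) (Set.Ioo (-1:ℝ) 1) := by
    intro p
    have h := hfw.mul_continuousOn p.continuous.continuousOn isCompact_Icc
    exact ((integrableOn_Icc_iff_integrableOn_Ioo).1 h).congr_fun
      (fun x _ => by ring) measurableSet_Ioo
  have hfpp : ∀ j k : ℕ,
      IntegrableOn (fun x => f x * ((T ℝ j).eval x * (T ℝ k).eval x) * chebW x)
        (Set.Ioo (-1:ℝ) 1) := by
    intro j k
    exact (hfp (T ℝ (j:ℤ) * T ℝ (k:ℤ))).congr_fun
      (fun x _ => by simp [Polynomial.eval_mul]) measurableSet_Ioo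
  have hwpp : ∀ j k : ℕ,
      IntegrableOn (fun x => ((T ℝ j).eval x * (T ℝ k).eval x) * chebW x)
        (Set.Ioo (-1:ℝ) 1) := by
    intro j k
    exact (chebW_poly_integrableOn (T ℝ (j:ℤ) * T ℝ (k:ℤ))).congr_fun
      (fun x _ => by simp [Polynomial.eval_mul]) measurableSet_Ioo
  set I : ℕ → ℝ := fun k => ∫ x in Set.Ioo (-1:ℝ) 1, f x * (T ℝ k).eval x * chebW x with hIdef
  have hπ : Real.pi ≠ 0 := Real.pi_ne_zero
  have hI : ∀ k, I k = Real.pi/2 * c k := by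
    intro k
    rw [hc k]
    have : (∫ x in Set.Icc (-1:ℝ) 1, f x * (T ℝ k).eval x * (1 / Real.sqrt (1 - x ^ 2)))
        = I k := by
      rw [MeasureTheory.integral_Icc_eq_integral_Ioo]; rfl
    rw [this]
    field_simp
  -- value of ∫ f ΔQ T_i w
  have hfprod : ∀ j k : ℕ,
      ∫ x in Set.Ioo (-1:ℝ) 1, f x * ((T ℝ j).eval x * (T ℝ k).eval x) * chebW x
        = (I (j+k) + I (((j:ℤ)-(k:ℤ)).natAbs)) / 2 :=
    cheb_prod_integral f hfp
  have hA : (∫ x in Set.Ioo (-1:ℝ) 1, f x * ΔQ x * (T ℝ i).eval x * chebW x)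
      = Real.pi/2 * Δa i := by
    have hpt : ∀ x ∈ Set.Ioo (-1:ℝ) 1,
        f x * ΔQ x * (T ℝ i).eval x * chebW x
          = (1/2 * Δb 0) * (f x * (T ℝ i).eval x * chebW x)
            + ∑ j ∈ Finset.Icc 1 m,
                Δb j * (f x * ((T ℝ j).eval x * (T ℝ i).eval x) * chebW x) := by
      intro x _
      rw [hΔQ x, Polynomial.Chebyshev.T_zero, Polynomial.eval_one]
      rw [Finset.sum_congr rfl (fun j _ =>
        show Δb j * (f x * ((T ℝ j).eval x * (T ℝ i).eval x) * chebW x)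
            = (Δb j * (T ℝ j).eval x) * (f x * (T ℝ i).eval x * chebW x) from by ring)]
      rw [← Finset.sum_mul]
      ring
    rw [setIntegral_congr_fun measurableSet_Ioo hpt]
    rw [integral_add ((hfp (T ℝ (i:ℤ))).const_mul _)
      (integrable_finset_sum _ (fun j _ => (hfpp j i).const_mul _))]
    rw [integral_const_mul, integral_finset_sum _ (fun j _ => (hfpp j i).const_mul _)]
    have hterm : ∀ j ∈ Finset.Icc 1 m,
        (∫ x in Set.Ioo (-1:ℝ) 1,
          Δb j * (f x * ((T ℝ j).eval x * (T ℝ i).eval x) * chebW x))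
          = Real.pi/4 * (Δb j * (c (i+j) + c (((i:ℤ)-(j:ℤ)).natAbs))) := by
      intro j _
      rw [integral_const_mul, hfprod j i]
      have h1 : j + i = i + j := Nat.add_comm j i
      have h2 : ((j:ℤ)-(i:ℤ)).natAbs = ((i:ℤ)-(j:ℤ)).natAbs := by
        rw [← Int.natAbs_neg, neg_sub]
      rw [h1, h2, hI (i+j), hI (((i:ℤ)-(j:ℤ)).natAbs)]
      ring
    rw [Finset.sum_congr rfl hterm, ← Finset.mul_sum]
    have hIi : (∫ x in Set.Ioo (-1:ℝ) 1, f x * (T ℝ (i:ℤ)).eval x * chebW x) = I i := rfl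
    rw [hIi, hI i, hΔa i hi]
    ring
  -- value of ∫ ΔP T_i w
  have hwprod : ∀ j k : ℕ,
      ∫ x in Set.Ioo (-1:ℝ) 1, ((T ℝ j).eval x * (T ℝ k).eval x) * chebW x
        = ((if j+k = 0 then Real.pi else 0)
          + (if (((j:ℤ)-(k:ℤ)).natAbs) = 0 then Real.pi else 0)) / 2 := by
    intro j k
    have hone : ∀ p : ℝ[X],
        IntegrableOn (fun x => (1:ℝ) * p.eval x * chebW x) (Set.Ioo (-1:ℝ) 1) := by
      intro p
      exact (chebW_poly_integrableOn p).congr_fun (fun x _ => by ring) measurableSet_Ioo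
    have h := cheb_prod_integral (fun _ => (1:ℝ)) hone j k
    have e1 : (∫ x in Set.Ioo (-1:ℝ) 1,
        (1:ℝ) * ((T ℝ j).eval x * (T ℝ k).eval x) * chebW x)
        = ∫ x in Set.Ioo (-1:ℝ) 1, ((T ℝ j).eval x * (T ℝ k).eval x) * chebW x :=
      setIntegral_congr_fun measurableSet_Ioo (fun x _ => by ring)
    have e2 : (∫ x in Set.Ioo (-1:ℝ) 1, (1:ℝ) * (T ℝ ((j+k:ℕ))).eval x * chebW x)
        = if j+k = 0 then Real.pi else 0 := by
      rw [setIntegral_congr_fun measurableSet_Ioo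
        (fun x _ => by ring : ∀ x ∈ Set.Ioo (-1:ℝ) 1,
          (1:ℝ) * (T ℝ ((j+k:ℕ))).eval x * chebW x = (T ℝ ((j+k:ℕ))).eval x * chebW x)]
      exact integral_T_chebW (j+k)
    have e3 : (∫ x in Set.Ioo (-1:ℝ) 1,
        (1:ℝ) * (T ℝ ((((j:ℤ)-(k:ℤ)).natAbs : ℕ))).eval x * chebW x)
        = if (((j:ℤ)-(k:ℤ)).natAbs) = 0 then Real.pi else 0 := by
      rw [setIntegral_congr_fun measurableSet_Ioo
        (fun x _ => by ring : ∀ x ∈ Set.Ioo (-1:ℝ) 1,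
          (1:ℝ) * (T ℝ ((((j:ℤ)-(k:ℤ)).natAbs : ℕ))).eval x * chebW x
            = (T ℝ ((((j:ℤ)-(k:ℤ)).natAbs : ℕ))).eval x * chebW x)]
      exact integral_T_chebW _
    rw [e1, e2, e3] at h
    exact h
  have hB : (∫ x in Set.Ioo (-1:ℝ) 1, ΔP x * (T ℝ i).eval x * chebW x)
      = Real.pi/2 * Δa i := by
    have hpt : ∀ x ∈ Set.Ioo (-1:ℝ) 1,
        ΔP x * (T ℝ i).eval x * chebW x
          = (1/2 * Δa 0) * ((T ℝ i).eval x * chebW x)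
            + ∑ k ∈ Finset.Icc 1 n,
                Δa k * (((T ℝ k).eval x * (T ℝ i).eval x) * chebW x) := by
      intro x _
      rw [hΔP x, Polynomial.Chebyshev.T_zero, Polynomial.eval_one]
      rw [Finset.sum_congr rfl (fun k _ =>
        show Δa k * (((T ℝ k).eval x * (T ℝ i).eval x) * chebW x)
            = (Δa k * (T ℝ k).eval x) * ((T ℝ i).eval x * chebW x) from by ring)]
      rw [← Finset.sum_mul]
      ring
    rw [setIntegral_congr_fun measurableSet_Ioo hpt]
    rw [integral_add ((chebW_poly_integrableOn (T ℝ (i:ℤ))).const_mul _)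
      (integrable_finset_sum _ (fun k _ => (hwpp k i).const_mul _))]
    rw [integral_const_mul, integral_finset_sum _ (fun k _ => (hwpp k i).const_mul _)]
    rw [integral_T_chebW i]
    have hterm : ∀ k ∈ Finset.Icc 1 n,
        (∫ x in Set.Ioo (-1:ℝ) 1,
          Δa k * (((T ℝ k).eval x * (T ℝ i).eval x) * chebW x))
          = Δa k * (((if k+i = 0 then Real.pi else 0)
            + (if (((k:ℤ)-(i:ℤ)).natAbs) = 0 then Real.pi else 0)) / 2) := by
      intro k _
      rw [integral_const_mul, hwprod k i]
    rw [Finset.sum_congr rfl hterm]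
    rcases Nat.eq_zero_or_pos i with h0 | h0
    · subst h0
      rw [if_pos rfl]
      have : ∀ k ∈ Finset.Icc 1 n,
          Δa k * (((if k+0 = 0 then Real.pi else 0)
            + (if (((k:ℤ)-((0:ℕ):ℤ)).natAbs) = 0 then Real.pi else 0)) / 2) = 0 := by
        intro k hk
        have hk1 : 1 ≤ k := (Finset.mem_Icc.1 hk).1
        rw [if_neg (by omega), if_neg (by simp; omega)]
        ring
      rw [Finset.sum_congr rfl this, Finset.sum_const_zero]
      ring
    · rw [if_neg h0.ne']
      have hmem : i ∈ Finset.Icc 1 n := Finset.mem_Icc.2 ⟨h0, hi⟩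
      rw [Finset.sum_eq_single_of_mem i hmem ?hz]
      · rw [if_neg (by omega), if_pos (by simp)]
        ring
      · intro k hk hne
        rw [if_neg (by have := (Finset.mem_Icc.1 hk).1; omega),
          if_neg (by simp; omega)]
        ring
  -- combine
  have hint1 : IntegrableOn (fun x => f x * ΔQ x * (T ℝ i).eval x * chebW x)
      (Set.Ioo (-1:ℝ) 1) := by
    have hq : ∀ x, ΔQ x = (Polynomial.C (1/2 * Δb 0)
        + ∑ j ∈ Finset.Icc 1 m, Polynomial.C (Δb j) * T ℝ (j:ℤ)).eval x := by
      intro x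
      rw [hΔQ x]
      simp [Polynomial.eval_finset_sum, Polynomial.Chebyshev.T_zero]
    have h := hfp ((Polynomial.C (1/2 * Δb 0)
        + ∑ j ∈ Finset.Icc 1 m, Polynomial.C (Δb j) * T ℝ (j:ℤ)) * T ℝ (i:ℤ))
    exact h.congr_fun (fun x _ => by beta_reduce; rw [Polynomial.eval_mul, ← hq x]; ring) measurableSet_Ioo
  have hint2 : IntegrableOn (fun x => ΔP x * (T ℝ i).eval x * chebW x)
      (Set.Ioo (-1:ℝ) 1) := by
    have hq : ∀ x, ΔP x = (Polynomial.C (1/2 * Δa 0)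
        + ∑ k ∈ Finset.Icc 1 n, Polynomial.C (Δa k) * T ℝ (k:ℤ)).eval x := by
      intro x
      rw [hΔP x]
      simp [Polynomial.eval_finset_sum, Polynomial.Chebyshev.T_zero]
    have h := chebW_poly_integrableOn ((Polynomial.C (1/2 * Δa 0)
        + ∑ k ∈ Finset.Icc 1 n, Polynomial.C (Δa k) * T ℝ (k:ℤ)) * T ℝ (i:ℤ))
    exact h.congr_fun (fun x _ => by beta_reduce; rw [Polynomial.eval_mul, ← hq x]) measurableSet_Ioo
  have hsplit : ∀ x ∈ Set.Ioo (-1:ℝ) 1,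
      (f x * ΔQ x - ΔP x) * (T ℝ i).eval x * chebW x
        = f x * ΔQ x * (T ℝ i).eval x * chebW x - ΔP x * (T ℝ i).eval x * chebW x := by
    intro x _; ring
  rw [setIntegral_congr_fun measurableSet_Ioo hsplit, integral_sub hint1 hint2, hA, hB, sub_self]
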